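/- Let S be a nonempty finite multiset of labeled examples and S' = S + s obtained by inserting one element. Let H(S) denote the Shannon entropy (base-e) of the empirical label distribution of S. If n = max(|S|,|S'|) ≥ 2, then |H(S) − H(S')| < 5·(log n)/n. -/

import Mathlib

open Finset

lemma sum_count_fin' {k : ℕ} (S : Multiset (Fin k)) : ∑ i : Fin k, S.count i = S.card := by
  rw [← Multiset.toFinset_sum_count_eq]
  exact (Finset.sum_subset (Finset.subset_univ _)
    (by intro x _ h; simpa [Multiset.count_eq_zero] using h)).symm

noncomputable def entA {k : ℕ} (S : Multiset (Fin k)) : ℝ :=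
  ∑ i : Fin k, (S.count i : ℝ) * Real.log (S.count i)

noncomputable def entS {k : ℕ} (S : Multiset (Fin k)) : ℝ :=
  ∑ i : Fin k, ((S.count i : ℝ) / S.card) * Real.log ((S.card : ℝ) / S.count i)

lemma ent_eq {k : ℕ} (S : Multiset (Fin k)) (hS : S ≠ 0) :
    entS S = Real.log S.card - entA S / S.card := by
  have hm : (0:ℝ) < S.card := by exact_mod_cast Multiset.card_pos.mpr hS
  unfold entS entA
  have h1 : ∀ i ∈ Finset.univ (α := Fin k),
      ((S.count i:ℝ)/S.card) * Real.log ((S.card : ℝ) / S.count i)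
      = ((S.count i:ℝ) * Real.log S.card - (S.count i:ℝ) * Real.log (S.count i)) / S.card := by
    intro i _
    by_cases h : S.count i = 0
    · simp [h]
    · have hc : (0:ℝ) < S.count i := by exact_mod_cast Nat.pos_of_ne_zero h
      rw [Real.log_div (ne_of_gt hm) (ne_of_gt hc)]; ring
  rw [Finset.sum_congr rfl h1, ← Finset.sum_div, Finset.sum_sub_distrib, ← Finset.sum_mul]
  have h2 : ∑ i : Fin k, (S.count i : ℝ) = S.card := by exact_mod_cast sum_count_fin' S
  rw [h2]
  field_simp

lemma entA_cons {k : ℕ} (S : Multiset (Fin k)) (s : Fin k) :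
    entA (s ::ₘ S) = entA S +
      (((S.count s : ℝ)+1) * Real.log ((S.count s:ℝ)+1)
        - (S.count s:ℝ) * Real.log (S.count s)) := by
  unfold entA
  have h : ∀ i ∈ Finset.univ (α := Fin k),
      ((s ::ₘ S).count i : ℝ) * Real.log ((s ::ₘ S).count i) =
      (S.count i:ℝ)*Real.log (S.count i) +
        (if i = s then (((S.count s:ℝ)+1) * Real.log ((S.count s:ℝ)+1)
          - (S.count s:ℝ) * Real.log (S.count s)) else 0) := by
    intro i _
    rcases eq_or_ne i s with rfl | h
    · simp only [Multiset.count_cons_self, if_pos rfl]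
      push_cast; ring
    · simp [Multiset.count_cons_of_ne h, h]
  rw [Finset.sum_congr rfl h, Finset.sum_add_distrib]
  congr 1
  simp

lemma entA_nonneg {k : ℕ} (S : Multiset (Fin k)) : 0 ≤ entA S := by
  apply Finset.sum_nonneg
  intro i _
  rcases Nat.eq_zero_or_pos (S.count i) with h | h
  · simp [h]
  · have h1 : (1:ℝ) ≤ S.count i := by exact_mod_cast h
    exact mul_nonneg (by positivity) (Real.log_nonneg h1)

lemma entA_le {k : ℕ} (S : Multiset (Fin k)) :
    entA S ≤ (S.card : ℝ) * Real.log S.card := by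
  have h2 : ∑ i : Fin k, (S.count i : ℝ) = S.card := by exact_mod_cast sum_count_fin' S
  calc entA S ≤ ∑ i : Fin k, (S.count i : ℝ) * Real.log S.card := by
        apply Finset.sum_le_sum
        intro i _
        rcases Nat.eq_zero_or_pos (S.count i) with h | h
        · simp [h]
        · have hc : (0:ℝ) < S.count i := by exact_mod_cast h
          have hle : (S.count i : ℝ) ≤ S.card := by
            exact_mod_cast S.count_le_card i
          exact mul_le_mul_of_nonneg_left (Real.log_le_log hc hle) (le_of_lt hc)
    _ = (S.card : ℝ) * Real.log S.card := by rw [← Finset.sum_mul, h2]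

/-- Inserting one element into a nonempty multiset `S` changes the empirical entropy
by less than `5 (log n)/n` where `n = max(|S|,|S+s|)`. -/
theorem stmt3 {k : ℕ} (S : Multiset (Fin k)) (hS : S ≠ 0) (s : Fin k)
    (n : ℕ) (hn : n = max S.card (s ::ₘ S).card) (h2 : 2 ≤ n) :
    |entS S - entS (s ::ₘ S)| < 5 * Real.log n / n := by
  have hcard : (s ::ₘ S).card = S.card + 1 := Multiset.card_cons s S
  have hm1 : 1 ≤ S.card := Multiset.card_pos.mpr hS
  have hn' : n = S.card + 1 := by rw [hn, hcard]; omega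
  set m := S.card with hmdef
  have hM : (1:ℝ) ≤ (m:ℝ) := by exact_mod_cast hm1
  set M : ℝ := (m:ℝ) with hMdef
  have hMpos : (0:ℝ) < M := by linarith
  have hM1pos : (0:ℝ) < M + 1 := by linarith
  set A := entA S with hA
  set c : ℝ := (S.count s : ℝ) with hc
  set d : ℝ := (c+1) * Real.log (c+1) - c * Real.log c with hd
  have hcnn : 0 ≤ c := by positivity
  have hcm : c ≤ M := by
    rw [hc, hMdef]
    exact_mod_cast S.count_le_card s
  -- entropies
  have hH : entS S = Real.log M - A / M := ent_eq S hS
  have hH' : entS (s ::ₘ S) = Real.log (M+1) - (A + d) / (M+1) := by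
    rw [ent_eq (s ::ₘ S) (Multiset.cons_ne_zero), entA_cons]
    rw [hcard]
    push_cast
    rfl
  -- bounds on d
  have hd0 : 0 ≤ d := by
    rcases eq_or_lt_of_le hcnn with h | h
    · simp [hd, ← h]
    · have h1 : c ≥ 1 := by
        rw [hc] at h ⊢
        have : 0 < S.count s := by exact_mod_cast h
        exact_mod_cast this
      have : c * Real.log c ≤ (c+1) * Real.log (c+1) :=
        mul_le_mul (by linarith) (Real.log_le_log h (by linarith)) (Real.log_nonneg h1) (by linarith)
      linarith [hd]
  have hdle : d ≤ Real.log (M+1) + 1 := by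
    rcases eq_or_lt_of_le hcnn with h | h
    · have : d = 0 := by simp [hd, ← h]
      rw [this]
      have : (0:ℝ) ≤ Real.log (M+1) := Real.log_nonneg (by linarith)
      linarith
    · have hlog1 : Real.log (c+1) ≤ Real.log (M+1) :=
        Real.log_le_log (by linarith) (by linarith)
      have hlog2 : Real.log (c+1) - Real.log c = Real.log ((c+1)/c) := by
        rw [Real.log_div (by linarith) (ne_of_gt h)]
      have hlog3 : Real.log ((c+1)/c) ≤ (c+1)/c - 1 :=
        Real.log_le_sub_one_of_pos (by positivity)
      have h4 : (c+1)/c - 1 = 1/c := by field_simp; ring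
      have h5 : c * (Real.log (c+1) - Real.log c) ≤ 1 := by
        rw [hlog2]
        calc c * Real.log ((c+1)/c) ≤ c * (1/c) :=
              mul_le_mul_of_nonneg_left (by rw [← h4]; exact hlog3) (le_of_lt h)
          _ = 1 := by field_simp
      have : d = Real.log (c+1) + c * (Real.log (c+1) - Real.log c) := by rw [hd]; ring
      linarith
  -- bounds on A
  have hA0 : 0 ≤ A := entA_nonneg S
  have hAle : A ≤ M * Real.log M := entA_le S
  -- difference D = H' - H
  have hD : entS (s ::ₘ S) - entS S =
      (Real.log (M+1) - Real.log M) + A / (M*(M+1)) - d/(M+1) := by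
    rw [hH, hH']
    field_simp
    ring
  -- log facts
  have hlogM : 0 ≤ Real.log M := Real.log_nonneg hM
  have hlogM1 : Real.log M ≤ Real.log (M+1) := Real.log_le_log hMpos (by linarith)
  have hlog2' : Real.log 2 ≤ Real.log (M+1) := Real.log_le_log (by norm_num) (by linarith)
  have hl2 : (0.6931471803 : ℝ) < Real.log 2 := Real.log_two_gt_d9
  -- upper bound for D
  have hup1 : Real.log (M+1) - Real.log M < 1/M := by
    have hgt1 : 1 < (M+1)/M := (one_lt_div hMpos).mpr (by linarith)
    have h1 : Real.log ((M+1)/M) < (M+1)/M - 1 :=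
      Real.log_lt_sub_one_of_pos (by positivity) (ne_of_gt hgt1)
    have h2 : Real.log ((M+1)/M) = Real.log (M+1) - Real.log M :=
      Real.log_div (by linarith) (ne_of_gt hMpos)
    have h3 : (M+1)/M - 1 = 1/M := by field_simp; ring
    rw [h2, h3] at h1
    exact h1
  have hup2 : A / (M*(M+1)) ≤ Real.log M / (M+1) := by
    calc A / (M*(M+1)) ≤ (M * Real.log M) / (M*(M+1)) := by gcongr
      _ = Real.log M / (M+1) := by
          rw [mul_div_mul_left _ _ (ne_of_gt hMpos)]
  have hup3 : (0:ℝ) ≤ d/(M+1) := by positivity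
  have hup : entS (s ::ₘ S) - entS S < 1/M + Real.log M/(M+1) := by
    rw [hD]; linarith
  have hkey1 : 1/M ≤ 2/(M+1) := by
    rw [div_le_div_iff₀ hMpos hM1pos]; linarith
  have hkey2 : Real.log M/(M+1) ≤ Real.log (M+1)/(M+1) := by gcongr
  have hkey3 : 2/(M+1) + Real.log (M+1)/(M+1) ≤ 5 * Real.log (M+1)/(M+1) := by
    rw [← add_div]
    gcongr
    linarith
  have hupfinal : entS (s ::ₘ S) - entS S < 5 * Real.log (M+1)/(M+1) := by
    linarith
  -- lower bound
  have hlow1 : -(d/(M+1)) ≤ entS (s ::ₘ S) - entS S := by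
    have h1 : (0:ℝ) ≤ A / (M*(M+1)) := by positivity
    rw [hD]; linarith
  have hlow2 : (Real.log (M+1) + 1)/(M+1) < 5 * Real.log (M+1)/(M+1) := by
    rw [div_lt_div_iff₀ hM1pos hM1pos]
    nlinarith [hl2, hlog2', hM1pos]
  have hlow3 : d/(M+1) ≤ (Real.log (M+1) + 1)/(M+1) := by gcongr
  have hlowfinal : -(5 * Real.log (M+1)/(M+1)) < entS (s ::ₘ S) - entS S := by
    linarith
  -- combine
  have hcast : (n:ℝ) = M + 1 := by rw [hn']; push_cast; rfl
  rw [abs_sub_comm, hcast]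
  exact abs_lt.mpr ⟨hlowfinal, hupfinal⟩
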